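/- Let q ≥ 2 and 1 ≤ t ≤ m be integers, and let M be an F×m array with entries in {0,...,q-1} that is an orthogonal array OA_λ(F,m,q,t) for some λ ≥ 1. Suppose that for every e ∈ {0,...,q-1}^m the quantity N(e,T) does not depend on the choice of the t-element subset T of {0,...,m-1} (this is equivalent to every symbol of the PDA generated by Construction 1 from M with full column index set occurring exactly C(m,t) times, i.e. to the coded gain being C(m,t)). Then: (1) M is a covering array CA(F,m,q,m−t), i.e. for every (m−t)-element subset S of {0,...,m-1}, every vector in {0,...,q-1}^{m−t} occurs at least once among the rows of M restricted to the coordinates in S; and (2) F ≥ q^{m−t}. -/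

import Mathlib

/-- An `F × m` array `M` with entries in `{0,...,q-1}` is an orthogonal array
`OA_λ(F,m,q,s)` of strength `s` and index `lam` if for every `s`-element subset
`S` of the column indices, every assignment of values to the coordinates in `S`
occurs exactly `lam` times among the rows of `M` restricted to `S`. -/
def IsOA (F m q s lam : ℕ) (M : Fin F → Fin m → Fin q) : Prop :=
  ∀ S : Finset (Fin m), S.card = s → ∀ v : Fin m → Fin q,
    {r : Fin F | ∀ i ∈ S, M r i = v i}.ncard = lam

/-- `Ncount M e T` is `N(e,T)`: the number of rows `f` of `M` with `f_i = e_i`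
for all `i ∉ T` and `f_i ≠ e_i` for all `i ∈ T`, i.e. the number of times the
vector `e` is induced in column `(T, e|_T)` of the array of Construction 1
built from `M` with full column index set. -/
noncomputable def Ncount {F m q : ℕ} (M : Fin F → Fin m → Fin q) (e : Fin m → Fin q)
    (T : Finset (Fin m)) : ℕ :=
  {r : Fin F | (∀ i ∉ T, M r i = e i) ∧ (∀ i ∈ T, M r i ≠ e i)}.ncard

/-- Theorem 4: let `q ≥ 2`, `1 ≤ t ≤ m`, and let `M` be an `F × m` array over
`{0,...,q-1}` which is an orthogonal array `OA_λ(F,m,q,t)` for some `λ ≥ 1`.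
If for every `e ∈ {0,...,q-1}^m` the quantity `N(e,T)` does not depend on the
`t`-element subset `T` (equivalently, the coded gain of the PDA generated by
Construction 1 from `M` with full column index set is `C(m,t)`), then `M` is a
covering array `CA(F,m,q,m−t)`, and consequently `F ≥ q^{m−t}`. -/
theorem coveringArray_of_max_gain (q m t F lam : ℕ)
    (hq : 2 ≤ q) (ht : 1 ≤ t) (htm : t ≤ m) (hlam : 1 ≤ lam)
    (M : Fin F → Fin m → Fin q) (hOA : IsOA F m q t lam M)
    (hN : ∀ e : Fin m → Fin q, ∀ T T' : Finset (Fin m),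
      T.card = t → T'.card = t → Ncount M e T = Ncount M e T') :
    (∀ S : Finset (Fin m), S.card = m - t → ∀ v : Fin m → Fin q,
        ∃ r : Fin F, ∀ i ∈ S, M r i = v i) ∧
      q ^ (m - t) ≤ F := by
  have hq0 : 0 < q := by omega
  have hcard : 1 < Fintype.card (Fin q) := by simp; omega
  have key : ∀ S : Finset (Fin m), S.card = m - t → ∀ v : Fin m → Fin q,
      ∃ r : Fin F, ∀ i ∈ S, M r i = v i := by
    intro S hS v
    have hTc : Sᶜ.card = t := by
      rw [Finset.card_compl, hS]
      simp only [Fintype.card_fin]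
      omega
    -- existence of a row
    obtain ⟨T1, hT1sub, hT1⟩ := Finset.exists_subset_card_eq (s := (Finset.univ : Finset (Fin m))) (n := t)
      (by simpa using htm)
    have hne : {r : Fin F | ∀ i ∈ T1, M r i = v i}.Nonempty := by
      rw [← Set.ncard_pos, hOA T1 hT1 v]; omega
    obtain ⟨r0, _⟩ := hne
    suffices h : ∀ n : ℕ, ∀ r : Fin F, (S.filter (fun i => M r i ≠ v i)).card ≤ n →
        ∃ r' : Fin F, ∀ i ∈ S, M r' i = v i from h _ r0 le_rfl
    intro n
    induction n with
    | zero =>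
      intro r hr
      refine ⟨r, fun i hi => ?_⟩
      by_contra hne'
      have hmem : i ∈ S.filter (fun i => M r i ≠ v i) := Finset.mem_filter.mpr ⟨hi, hne'⟩
      rw [Finset.card_eq_zero.mp (Nat.le_zero.mp hr)] at hmem
      exact absurd hmem (Finset.notMem_empty i)
    | succ n ih =>
      intro r hr
      set D := S.filter (fun i => M r i ≠ v i) with hDdef
      by_cases hd0 : D.card = 0
      · refine ⟨r, fun i hi => ?_⟩
        by_contra hne'
        have hmem : i ∈ D := Finset.mem_filter.mpr ⟨hi, hne'⟩
        rw [Finset.card_eq_zero.mp hd0] at hmem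
        exact absurd hmem (Finset.notMem_empty i)
      · set k := min D.card t with hkdef
        have hk1 : 1 ≤ k := by
          have : 1 ≤ D.card := Nat.one_le_iff_ne_zero.mpr hd0
          omega
        obtain ⟨D', hD'sub, hD'⟩ := Finset.exists_subset_card_eq (s := D) (n := k) (min_le_left _ _)
        obtain ⟨P, hPsub, hP⟩ := Finset.exists_subset_card_eq (s := Sᶜ) (n := t - k) (by omega)
        -- a value different from M r i at each coordinate
        have hg : ∀ i : Fin m, ∃ y : Fin q, y ≠ M r i := fun i =>
          Fintype.exists_ne_of_one_lt_card hcard (M r i)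
        classical
        set e : Fin m → Fin q := fun i =>
          if i ∈ D' then v i else if i ∈ P then (hg i).choose else M r i with hedef
        have hD'S : D' ⊆ S := hD'sub.trans (Finset.filter_subset _ _)
        have hdisj : Disjoint D' P := by
          refine Finset.disjoint_left.mpr fun a haD' haP => ?_
          exact (Finset.mem_compl.mp (hPsub haP)) (hD'S haD')
        set T1' := D' ∪ P with hT1'def
        have hT1'card : T1'.card = t := by
          rw [hT1'def, Finset.card_union_of_disjoint hdisj, hD', hP]
          omega
        -- r witnesses Ncount M e T1' ≥ 1
        have hrmem : r ∈ {r' : Fin F | (∀ i ∉ T1', M r' i = e i) ∧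
            (∀ i ∈ T1', M r' i ≠ e i)} := by
          constructor
          · intro i hi
            have hiD' : i ∉ D' := fun h => hi (Finset.mem_union_left _ h)
            have hiP : i ∉ P := fun h => hi (Finset.mem_union_right _ h)
            simp [hedef, hiD', hiP]
          · intro i hi
            rcases Finset.mem_union.mp hi with hiD' | hiP
            · have : M r i ≠ v i := (Finset.mem_filter.mp (hD'sub hiD')).2
              simpa [hedef, hiD'] using this
            · have hiD' : i ∉ D' := fun h => Finset.disjoint_left.mp hdisj h hiP
              have := (hg i).choose_spec
              simpa [hedef, hiD', hiP] using Ne.symm this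
        have hpos : 0 < Ncount M e T1' := by
          rw [Ncount, Set.ncard_pos]
          exact ⟨r, hrmem⟩
        have hpos' : 0 < Ncount M e Sᶜ := by
          rwa [← hN e T1' Sᶜ hT1'card hTc]
        rw [Ncount, Set.ncard_pos] at hpos'
        obtain ⟨r2, hr2, -⟩ := hpos'
        -- the new disagreement set is contained in D \ D'
        have hsub : S.filter (fun i => M r2 i ≠ v i) ⊆ D \ D' := by
          intro i hi
          obtain ⟨hiS, hiv⟩ := Finset.mem_filter.mp hi
          have hinc : i ∉ Sᶜ := by simpa using hiS
          have heq : M r2 i = e i := hr2 i hinc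
          have hiP : i ∉ P := fun h => (Finset.mem_compl.mp (hPsub h)) hiS
          have hiD' : i ∉ D' := by
            intro h
            apply hiv
            rw [heq]
            simp [hedef, h]
          refine Finset.mem_sdiff.mpr ⟨Finset.mem_filter.mpr ⟨hiS, ?_⟩, hiD'⟩
          intro hcon
          apply hiv
          rw [heq]
          simp [hedef, hiD', hiP, hcon]
        have hcard2 : (S.filter (fun i => M r2 i ≠ v i)).card ≤ n := by
          have h1 : (D \ D').card = D.card - k := by
            rw [Finset.card_sdiff_of_subset hD'sub, hD']
          have := Finset.card_le_card hsub
          omega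
        exact ih r2 hcard2
  refine ⟨key, ?_⟩
  obtain ⟨S0, -, hS0⟩ := Finset.exists_subset_card_eq (s := (Finset.univ : Finset (Fin m))) (n := m - t)
    (by simp)
  classical
  have hsurj : Function.Surjective (fun r : Fin F => fun i : S0 => M r i) := by
    intro w
    obtain ⟨r, hr⟩ := key S0 hS0 (fun i => if h : i ∈ S0 then w ⟨i, h⟩ else ⟨0, hq0⟩)
    refine ⟨r, funext fun i => ?_⟩
    have := hr i i.2
    simpa [i.2] using this
  have := Fintype.card_le_of_surjective _ hsurj
  simpa [Fintype.card_fun, Fintype.card_coe, hS0] using this
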